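/- Let g : [0,1] → ℝ be continuous with g > 0, let μ < τ be real numbers, let u be a C² solution of -(g·u')' = μ·g·u and v a C² solution of -(g·v')' = τ·g·v on [0,1]. Suppose u(a) = u(b) = 0 for some 0 ≤ a < b ≤ 1 with u(x) ≠ 0 for all x ∈ (a,b). Then v has a zero in (a,b). -/

import Mathlib

open Set Filter Topology

private lemma forced_hasDerivAt {g w : ℝ → ℝ} {lam x : ℝ}
    (heq : -deriv (fun t => g t * deriv w t) x = lam * g x * w x)
    (hne : lam * g x * w x ≠ 0) :
    HasDerivAt (fun t => g t * deriv w t) (-(lam * g x * w x)) x := by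
  have hd : DifferentiableAt ℝ (fun t => g t * deriv w t) x := by
    by_contra hc
    rw [deriv_zero_of_not_differentiableAt hc] at heq
    exact hne (by linarith)
  have h2 : deriv (fun t => g t * deriv w t) x = -(lam * g x * w x) := by linarith
  exact h2 ▸ hd.hasDerivAt

private lemma deriv_nonneg_right {f : ℝ → ℝ} {f' a b : ℝ} (hab : a < b)
    (hf : HasDerivAt f f' a) (h0 : f a = 0)
    (hpos : ∀ x ∈ Ioo a b, 0 < f x) : 0 ≤ f' := by
  have ht : Tendsto (slope f a) (𝓝[>] a) (𝓝 f') :=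
    (hasDerivAt_iff_tendsto_slope.mp hf).mono_left
      (nhdsWithin_mono _ (fun x hx => ne_of_gt hx))
  refine ge_of_tendsto ht ?_
  filter_upwards [Ioo_mem_nhdsGT_of_mem ⟨le_refl a, hab⟩] with x hx
  rw [slope_def_field, h0]
  apply div_nonneg
  · linarith [hpos x hx]
  · linarith [hx.1]

private lemma deriv_nonpos_left {f : ℝ → ℝ} {f' a b : ℝ} (hab : a < b)
    (hf : HasDerivAt f f' b) (h0 : f b = 0)
    (hpos : ∀ x ∈ Ioo a b, 0 < f x) : f' ≤ 0 := by
  have ht : Tendsto (slope f b) (𝓝[<] b) (𝓝 f') :=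
    (hasDerivAt_iff_tendsto_slope.mp hf).mono_left
      (nhdsWithin_mono _ (fun x hx => ne_of_lt hx))
  refine le_of_tendsto ht ?_
  filter_upwards [Ioo_mem_nhdsLT_of_mem ⟨hab, le_refl b⟩] with x hx
  rw [slope_def_field, h0]
  exact div_nonpos_iff.mpr (Or.inl ⟨by linarith [hpos x hx], by linarith [hx.2]⟩)

private lemma nonneg_endpoint_left {f : ℝ → ℝ} {a b : ℝ} (hab : a < b)
    (hf : ContinuousAt f a) (hpos : ∀ x ∈ Ioo a b, 0 < f x) : 0 ≤ f a := by
  refine ge_of_tendsto (hf.continuousWithinAt (s := Ioi a)) ?_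
  filter_upwards [Ioo_mem_nhdsGT_of_mem ⟨le_refl a, hab⟩] with x hx
  exact (hpos x hx).le

private lemma nonneg_endpoint_right {f : ℝ → ℝ} {a b : ℝ} (hab : a < b)
    (hf : ContinuousAt f b) (hpos : ∀ x ∈ Ioo a b, 0 < f x) : 0 ≤ f b := by
  refine ge_of_tendsto (hf.continuousWithinAt (s := Iio b)) ?_
  filter_upwards [Ioo_mem_nhdsLT_of_mem ⟨hab, le_refl b⟩] with x hx
  exact (hpos x hx).le

private lemma const_of_hasDerivAt_zero {f : ℝ → ℝ} {s : Set ℝ} (hs : Convex ℝ s)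
    (ho : IsOpen s) (hf : ∀ x ∈ s, HasDerivAt f 0 x) {x y : ℝ}
    (hx : x ∈ s) (hy : y ∈ s) : f x = f y := by
  have hdiff : DifferentiableOn ℝ f s :=
    fun z hz => ((hf z hz).differentiableAt).differentiableWithinAt
  have hdiff' : DifferentiableOn ℝ f (interior s) := by rwa [ho.interior_eq]
  have hcont : ContinuousOn f s := hdiff.continuousOn
  have hderiv : ∀ z ∈ interior s, deriv f z = 0 := by
    intro z hz
    rw [ho.interior_eq] at hz
    exact (hf z hz).deriv
  have h1 : ∀ p ∈ s, ∀ q ∈ s, p ≤ q → f q - f p ≤ 0 := by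
    intro p hp q hq hpq
    have := hs.image_sub_le_mul_sub_of_deriv_le hcont hdiff'
      (fun z hz => le_of_eq (hderiv z hz)) p hp q hq hpq
    simpa using this
  have h2 : ∀ p ∈ s, ∀ q ∈ s, p ≤ q → 0 ≤ f q - f p := by
    intro p hp q hq hpq
    have := hs.mul_sub_le_image_sub_of_le_deriv hcont hdiff'
      (fun z hz => ge_of_eq (hderiv z hz)) p hp q hq hpq
    simpa using this
  rcases le_total x y with h | h
  · linarith [h1 x hx y hy h, h2 x hx y hy h]
  · linarith [h1 y hy x hx h, h2 y hy x hx h]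

private lemma sturm_key (g u v : ℝ → ℝ) (μ τ : ℝ) (hμτ : μ < τ)
    (hg : ContinuousOn g (Icc (0:ℝ) 1))
    (hgpos : ∀ x ∈ Icc (0:ℝ) 1, 0 < g x)
    (hu : ContDiff ℝ 2 u) (hv : ContDiff ℝ 2 v)
    (hequ : ∀ x ∈ Icc (0:ℝ) 1,
      -deriv (fun t => g t * deriv u t) x = μ * g x * u x)
    (heqv : ∀ x ∈ Icc (0:ℝ) 1,
      -deriv (fun t => g t * deriv v t) x = τ * g x * v x)
    (a b : ℝ) (ha : 0 ≤ a) (hab : a < b) (hb : b ≤ 1)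
    (hua : u a = 0) (hub : u b = 0)
    (hupos : ∀ x ∈ Ioo a b, 0 < u x) (hvpos : ∀ x ∈ Ioo a b, 0 < v x) : False := by
  have hsub : Icc a b ⊆ Icc (0:ℝ) 1 := Icc_subset_Icc ha hb
  have hIoo : Ioo a b ⊆ Icc (0:ℝ) 1 := fun x hx => hsub (Ioo_subset_Icc_self hx)
  have hudiff : Differentiable ℝ u := hu.differentiable two_ne_zero
  have hvdiff : Differentiable ℝ v := hv.differentiable two_ne_zero
  have h21 : (2 : WithTop ℕ∞) = 1 + 1 := by norm_num
  have hu'c1 : ContDiff ℝ 1 (deriv u) := ((contDiff_succ_iff_deriv).mp (h21 ▸ hu)).2.2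
  have hv'c1 : ContDiff ℝ 1 (deriv v) := ((contDiff_succ_iff_deriv).mp (h21 ▸ hv)).2.2
  have hu'd : Differentiable ℝ (deriv u) := hu'c1.differentiable one_ne_zero
  have hv'd : Differentiable ℝ (deriv v) := hv'c1.differentiable one_ne_zero
  have hu'c : Continuous (deriv u) := hu'd.continuous
  have hv'c : Continuous (deriv v) := hv'd.continuous
  have hgc : ∀ x ∈ Ioo a b, ContinuousAt g x := fun x hx =>
    hg.continuousAt (Icc_mem_nhds (lt_of_le_of_lt ha hx.1) (lt_of_lt_of_le hx.2 hb))
  have haI : a ∈ Icc (0:ℝ) 1 := hsub ⟨le_rfl, hab.le⟩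
  have hbI : b ∈ Icc (0:ℝ) 1 := hsub ⟨hab.le, le_rfl⟩
  have hga : 0 < g a := hgpos a haI
  have hgb : 0 < g b := hgpos b hbI
  have hua' : 0 ≤ deriv u a :=
    deriv_nonneg_right hab (hudiff a).hasDerivAt hua hupos
  have hub' : deriv u b ≤ 0 :=
    deriv_nonpos_left hab (hudiff b).hasDerivAt hub hupos
  have hva : 0 ≤ v a := nonneg_endpoint_left hab (hvdiff.continuous.continuousAt) hvpos
  have hvb : 0 ≤ v b := nonneg_endpoint_right hab (hvdiff.continuous.continuousAt) hvpos
  rcases lt_trichotomy μ 0 with hμ | hμ | hμ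
  · -- μ < 0 : g * u' is strictly increasing, contradiction from u alone
    have hF : ∀ x ∈ Ioo a b, HasDerivAt (fun t => g t * deriv u t) (-(μ * g x * u x)) x := by
      intro x hx
      refine forced_hasDerivAt (hequ x (hIoo hx)) (ne_of_lt ?_)
      exact mul_neg_of_neg_of_pos (mul_neg_of_neg_of_pos hμ (hgpos x (hIoo hx))) (hupos x hx)
    have hFcont : ContinuousOn (fun t => g t * deriv u t) (Icc a b) :=
      (hg.mono hsub).mul hu'c.continuousOn
    have hmono : StrictMonoOn (fun t => g t * deriv u t) (Icc a b) := by
      apply strictMonoOn_of_deriv_pos (convex_Icc a b) hFcont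
      intro x hx
      rw [interior_Icc] at hx
      rw [(hF x hx).deriv]
      have := mul_neg_of_neg_of_pos (mul_neg_of_neg_of_pos hμ (hgpos x (hIoo hx))) (hupos x hx)
      linarith
    have hupos' : ∀ x ∈ Ioo a b, 0 < deriv u x := by
      intro x hx
      have h1 : g a * deriv u a < g x * deriv u x :=
        hmono ⟨le_rfl, hab.le⟩ (Ioo_subset_Icc_self hx) hx.1
      have h2 : 0 ≤ g a * deriv u a := mul_nonneg hga.le hua'
      by_contra h
      push_neg at h
      have : g x * deriv u x ≤ 0 :=
        mul_nonpos_of_nonneg_of_nonpos (hgpos x (hIoo hx)).le h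
      linarith
    have humono : StrictMonoOn u (Icc a b) := by
      apply strictMonoOn_of_deriv_pos (convex_Icc a b) hudiff.continuous.continuousOn
      intro x hx
      rw [interior_Icc] at hx
      exact hupos' x hx
    have := humono ⟨le_rfl, hab.le⟩ ⟨hab.le, le_rfl⟩ hab
    rw [hua, hub] at this
    exact lt_irrefl 0 this
  · -- μ = 0 : g * u' is locally constant, hence constant; Rolle gives contradiction
    have hτ : 0 < τ := by rw [hμ] at hμτ; exact hμτ
    have hG : ∀ x ∈ Ioo a b, HasDerivAt (fun t => g t * deriv v t) (-(τ * g x * v x)) x := by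
      intro x hx
      refine forced_hasDerivAt (heqv x (hIoo hx)) (ne_of_gt ?_)
      exact mul_pos (mul_pos hτ (hgpos x (hIoo hx))) (hvpos x hx)
    have hgd : ∀ x ∈ Ioo a b, deriv v x ≠ 0 → DifferentiableAt ℝ g x := by
      intro x hx hne
      have hq : DifferentiableAt ℝ (fun t => (g t * deriv v t) / deriv v t) x :=
        ((hG x hx).differentiableAt).div (hv'd x) hne
      apply hq.congr_of_eventuallyEq
      filter_upwards [hv'c.continuousAt.eventually_ne hne] with y hy
      exact (mul_div_cancel_right₀ (g y) hy).symm
    have hF0 : ∀ x ∈ Ioo a b, deriv v x ≠ 0 →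
        HasDerivAt (fun t => g t * deriv u t) 0 x := by
      intro x hx hne
      have hd : DifferentiableAt ℝ (fun t => g t * deriv u t) x :=
        (hgd x hx hne).mul (hu'd x)
      have h1 := hequ x (hIoo hx)
      rw [hμ] at h1
      have h2 : deriv (fun t => g t * deriv u t) x = 0 := by
        simp only [zero_mul] at h1; linarith
      exact h2 ▸ hd.hasDerivAt
    have hiso : ∀ z ∈ Ioo a b, deriv v z = 0 → ∀ᶠ y in 𝓝[≠] z, deriv v y ≠ 0 := by
      intro z hz h0
      have h2 : Tendsto (slope (deriv v) z) (𝓝[≠] z) (𝓝 (deriv (deriv v) z)) :=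
        hasDerivAt_iff_tendsto_slope.mp (hv'd z).hasDerivAt
      have h1 : Tendsto g (𝓝[≠] z) (𝓝 (g z)) :=
        ((hgc z hz).tendsto).mono_left nhdsWithin_le_nhds
      have hslope : Tendsto (slope (fun t => g t * deriv v t) z) (𝓝[≠] z)
          (𝓝 (g z * deriv (deriv v) z)) := by
        apply (h1.mul h2).congr
        intro y
        simp only [slope_def_field, h0, mul_zero, sub_zero]
        rw [mul_div_assoc]
      have hG2 : HasDerivAt (fun t => g t * deriv v t) (g z * deriv (deriv v) z) z :=
        hasDerivAt_iff_tendsto_slope.mpr hslope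
      have huniq : g z * deriv (deriv v) z = -(τ * g z * v z) := hG2.unique (hG z hz)
      have hvz : deriv (deriv v) z ≠ 0 := by
        intro h
        rw [h, mul_zero] at huniq
        have := mul_pos (mul_pos hτ (hgpos z (hIoo hz))) (hvpos z hz)
        linarith
      filter_upwards [h2.eventually_ne hvz] with y hy
      intro hy0
      apply hy
      rw [slope_def_field, hy0, h0]
      simp
    have hFcA : ∀ x ∈ Ioo a b, ContinuousAt (fun t => g t * deriv u t) x :=
      fun x hx => (hgc x hx).mul hu'c.continuousAt
    have hloc : ∀ w ∈ Ioo a b, ∀ᶠ y in 𝓝 w,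
        (fun t => g t * deriv u t) y = (fun t => g t * deriv u t) w := by
      intro w hw
      have hP : ∀ᶠ y in 𝓝 w, y ∈ Ioo a b ∧ (y ≠ w → deriv v y ≠ 0) := by
        by_cases h0 : deriv v w = 0
        · have h3 := eventually_nhdsWithin_iff.mp (hiso w hw h0)
          filter_upwards [isOpen_Ioo.mem_nhds hw, h3] with y hy1 hy2
          exact ⟨hy1, fun hne => hy2 hne⟩
        · filter_upwards [isOpen_Ioo.mem_nhds hw, hv'c.continuousAt.eventually_ne h0]
            with y h1 h2
          exact ⟨h1, fun _ => h2⟩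
      obtain ⟨ε, hε, hball⟩ := Metric.eventually_nhds_iff.mp hP
      have hmem : ∀ y ∈ Ioo (w - ε) (w + ε), y ∈ Ioo a b ∧ (y ≠ w → deriv v y ≠ 0) := by
        intro y hy
        apply hball
        rw [Real.dist_eq, abs_lt]
        constructor <;> [linarith [hy.1]; linarith [hy.2]]
      have hder : ∀ s : Set ℝ, s ⊆ Ioo (w - ε) (w + ε) → (w ∉ s) →
          ∀ z ∈ s, HasDerivAt (fun t => g t * deriv u t) 0 z := by
        intro s hs hws z hz
        have h1 := hmem z (hs hz)
        have hzw : z ≠ w := fun h => hws (h ▸ hz)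
        exact hF0 z h1.1 (h1.2 hzw)
      have hconstR : ∀ y ∈ Ioo w (w + ε),
          (fun t => g t * deriv u t) y = (fun t => g t * deriv u t) w := by
        intro y hy
        have hc : ∀ p ∈ Ioo w (w + ε), (fun t => g t * deriv u t) p =
            (fun t => g t * deriv u t) y := by
          intro p hp
          exact const_of_hasDerivAt_zero (convex_Ioo w (w + ε)) isOpen_Ioo
            (hder (Ioo w (w + ε)) (fun z hz => ⟨by linarith [hz.1], hz.2⟩)
              (fun h => lt_irrefl w h.1)) hp hy
        have ht : Tendsto (fun t => g t * deriv u t) (𝓝[>] w)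
            (𝓝 ((fun t => g t * deriv u t) w)) := (hFcA w hw).continuousWithinAt
        have heq : ∀ᶠ t in 𝓝[>] w, (fun t => g t * deriv u t) t =
            (fun t => g t * deriv u t) y := by
          filter_upwards [Ioo_mem_nhdsGT_of_mem ⟨le_rfl, hy.1⟩] with t ht'
          exact hc t ⟨ht'.1, lt_trans ht'.2 hy.2⟩
        exact (tendsto_nhds_unique ((tendsto_congr' heq).mp ht) tendsto_const_nhds).symm
      have hconstL : ∀ y ∈ Ioo (w - ε) w,
          (fun t => g t * deriv u t) y = (fun t => g t * deriv u t) w := by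
        intro y hy
        have hc : ∀ p ∈ Ioo (w - ε) w, (fun t => g t * deriv u t) p =
            (fun t => g t * deriv u t) y := by
          intro p hp
          exact const_of_hasDerivAt_zero (convex_Ioo (w - ε) w) isOpen_Ioo
            (hder (Ioo (w - ε) w) (fun z hz => ⟨hz.1, by linarith [hz.2]⟩)
              (fun h => lt_irrefl w h.2)) hp hy
        have ht : Tendsto (fun t => g t * deriv u t) (𝓝[<] w)
            (𝓝 ((fun t => g t * deriv u t) w)) := (hFcA w hw).continuousWithinAt
        have heq : ∀ᶠ t in 𝓝[<] w, (fun t => g t * deriv u t) t =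
            (fun t => g t * deriv u t) y := by
          filter_upwards [Ioo_mem_nhdsLT_of_mem ⟨hy.2, le_rfl⟩] with t ht'
          exact hc t ⟨lt_trans hy.1 ht'.1, ht'.2⟩
        exact (tendsto_nhds_unique ((tendsto_congr' heq).mp ht) tendsto_const_nhds).symm
      filter_upwards [Ioo_mem_nhds (by linarith : w - ε < w) (by linarith : w < w + ε)]
        with y hy
      rcases lt_trichotomy y w with h | h | h
      · exact hconstL y ⟨hy.1, h⟩
      · rw [h]
      · exact hconstR y ⟨h, hy.2⟩
    -- g * u' is constant on Ioo a b
    set x₀ := (a + b) / 2 with hx₀def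
    have hx₀ : x₀ ∈ Ioo a b := ⟨by rw [hx₀def]; linarith, by rw [hx₀def]; linarith⟩
    have key : ∀ x ∈ Ioo a b, (fun t => g t * deriv u t) x =
        (fun t => g t * deriv u t) x₀ := by
      by_contra hk
      push_neg at hk
      obtain ⟨y, hy, hyne⟩ := hk
      have hAo : IsOpen {x | x ∈ Ioo a b ∧
          (fun t => g t * deriv u t) x = (fun t => g t * deriv u t) x₀} := by
        rw [isOpen_iff_eventually]
        rintro x ⟨hx1, hx2⟩
        filter_upwards [hloc x hx1, isOpen_Ioo.eventually_mem hx1] with t h1 h2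
        exact ⟨h2, h1.trans hx2⟩
      have hBo : IsOpen {x | x ∈ Ioo a b ∧
          (fun t => g t * deriv u t) x ≠ (fun t => g t * deriv u t) x₀} := by
        rw [isOpen_iff_eventually]
        rintro x ⟨hx1, hx2⟩
        filter_upwards [hloc x hx1, isOpen_Ioo.eventually_mem hx1] with t h1 h2
        exact ⟨h2, fun h => hx2 (h1.symm.trans h)⟩
      obtain ⟨t, _, ⟨_, h1⟩, ⟨_, h2⟩⟩ := isPreconnected_Ioo (a := a) (b := b) _ _ hAo hBo
        (fun t ht => by
          by_cases h : (fun t => g t * deriv u t) t = (fun t => g t * deriv u t) x₀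
          · exact Or.inl ⟨ht, h⟩
          · exact Or.inr ⟨ht, h⟩)
        ⟨x₀, hx₀, hx₀, rfl⟩ ⟨y, hy, hy, hyne⟩
      exact h2 h1
    -- Rolle: deriv u vanishes somewhere, hence g * u' ≡ 0, hence u' ≡ 0 on Ioo a b
    obtain ⟨c, hc, hc0⟩ := exists_deriv_eq_zero hab hudiff.continuous.continuousOn
      (hua.trans hub.symm)
    have hall0 : ∀ x ∈ Ioo a b, deriv u x = 0 := by
      intro x hx
      have h3 : g x * deriv u x = 0 := by
        have h1 := key x hx
        have h2 := key c hc
        simp only at h1 h2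
        rw [h1, ← h2, hc0, mul_zero]
      rcases mul_eq_zero.mp h3 with h | h
      · exact absurd h (ne_of_gt (hgpos x (hIoo hx)))
      · exact h
    have huc : ∀ x ∈ Ioo a b, u x = u x₀ := fun x hx =>
      const_of_hasDerivAt_zero (convex_Ioo a b) isOpen_Ioo
        (fun z hz => (hall0 z hz) ▸ (hudiff z).hasDerivAt) hx hx₀
    have ht : Tendsto u (𝓝[>] a) (𝓝 (u a)) :=
      hudiff.continuous.continuousAt.continuousWithinAt
    have heq : ∀ᶠ t in 𝓝[>] a, u t = u x₀ := by
      filter_upwards [Ioo_mem_nhdsGT_of_mem ⟨le_rfl, hab⟩] with t ht'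
      exact huc t ht'
    have h0 : u a = u x₀ := tendsto_nhds_unique ((tendsto_congr' heq).mp ht) tendsto_const_nhds
    rw [hua] at h0
    exact absurd h0.symm (ne_of_gt (hupos x₀ hx₀))
  · -- μ > 0 (hence τ > 0): Wronskian argument
    have hτ : 0 < τ := lt_trans hμ hμτ
    have hF : ∀ x ∈ Ioo a b, HasDerivAt (fun t => g t * deriv u t) (-(μ * g x * u x)) x := by
      intro x hx
      refine forced_hasDerivAt (hequ x (hIoo hx)) (ne_of_gt ?_)
      exact mul_pos (mul_pos hμ (hgpos x (hIoo hx))) (hupos x hx)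
    have hG : ∀ x ∈ Ioo a b, HasDerivAt (fun t => g t * deriv v t) (-(τ * g x * v x)) x := by
      intro x hx
      refine forced_hasDerivAt (heqv x (hIoo hx)) (ne_of_gt ?_)
      exact mul_pos (mul_pos hτ (hgpos x (hIoo hx))) (hvpos x hx)
    set W := fun t => (g t * deriv u t) * v t - u t * (g t * deriv v t) with hWdef
    have hW : ∀ x ∈ Ioo a b, HasDerivAt W ((τ - μ) * (g x * (u x * v x))) x := by
      intro x hx
      have h1 := ((hF x hx).fun_mul (hvdiff x).hasDerivAt).fun_sub
        (((hudiff x).hasDerivAt).fun_mul (hG x hx))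
      exact h1.congr_deriv (by ring)
    have hWc : ContinuousOn W (Icc a b) :=
      (((hg.mono hsub).mul hu'c.continuousOn).mul hvdiff.continuous.continuousOn).sub
        (hudiff.continuous.continuousOn.mul ((hg.mono hsub).mul hv'c.continuousOn))
    have hmono : StrictMonoOn W (Icc a b) := by
      apply strictMonoOn_of_deriv_pos (convex_Icc a b) hWc
      intro x hx
      rw [interior_Icc] at hx
      rw [(hW x hx).deriv]
      have h1 := mul_pos (hgpos x (hIoo hx)) (mul_pos (hupos x hx) (hvpos x hx))
      have h2 : 0 < τ - μ := by linarith
      exact mul_pos h2 h1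
    have hlt : W a < W b := hmono ⟨le_rfl, hab.le⟩ ⟨hab.le, le_rfl⟩ hab
    have hWa : 0 ≤ W a := by
      have : W a = (g a * deriv u a) * v a := by rw [hWdef]; simp [hua]
      rw [this]
      exact mul_nonneg (mul_nonneg hga.le hua') hva
    have hWb : W b ≤ 0 := by
      have : W b = (g b * deriv u b) * v b := by rw [hWdef]; simp [hub]
      rw [this]
      exact mul_nonpos_of_nonpos_of_nonneg
        (mul_nonpos_of_nonneg_of_nonpos hgb.le hub') hvb
    linarith

private lemma sign_dichotomy {f : ℝ → ℝ} {a b : ℝ} (hf : Continuous f)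
    (hne : ∀ x ∈ Ioo a b, f x ≠ 0) :
    (∀ x ∈ Ioo a b, 0 < f x) ∨ (∀ x ∈ Ioo a b, 0 < -f x) := by
  by_cases hp : ∀ x ∈ Ioo a b, 0 < f x
  · exact Or.inl hp
  · right
    push_neg at hp
    obtain ⟨x₁, hx₁, hx₁le⟩ := hp
    have hneg : f x₁ < 0 := lt_of_le_of_ne hx₁le (hne x₁ hx₁)
    intro x hx
    rw [neg_pos]
    by_contra h
    push_neg at h
    have hfx : 0 < f x := lt_of_le_of_ne h (Ne.symm (hne x hx))
    rcases lt_trichotomy x₁ x with hlt | heq | hgt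
    · have hmem : (0:ℝ) ∈ Icc (f x₁) (f x) := ⟨hneg.le, hfx.le⟩
      obtain ⟨y, hy, hy0⟩ := intermediate_value_Icc hlt.le hf.continuousOn hmem
      exact hne y ⟨lt_of_lt_of_le hx₁.1 hy.1, lt_of_le_of_lt hy.2 hx.2⟩ hy0
    · rw [heq] at hneg; linarith
    · have hmem : (0:ℝ) ∈ Icc (f x₁) (f x) := ⟨hneg.le, hfx.le⟩
      obtain ⟨y, hy, hy0⟩ := intermediate_value_Icc' hgt.le hf.continuousOn hmem
      exact hne y ⟨lt_of_lt_of_le hx.1 hy.1, lt_of_le_of_lt hy.2 hx₁.2⟩ hy0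

private lemma neg_eq_transform {g w : ℝ → ℝ} {lam : ℝ}
    (heq : ∀ x ∈ Icc (0:ℝ) 1, -deriv (fun t => g t * deriv w t) x = lam * g x * w x) :
    ∀ x ∈ Icc (0:ℝ) 1,
      -deriv (fun t => g t * deriv (fun s => -w s) t) x = lam * g x * (fun s => -w s) x := by
  intro x hx
  have h1 : (fun t => g t * deriv (fun s => -w s) t) = fun t => -(g t * deriv w t) := by
    funext t
    rw [deriv.fun_neg]
    ring
  rw [h1, deriv.fun_neg]
  have := heq x hx
  simp only
  linarith

/-- Sturm comparison theorem for the weighted Sturm–Liouville equation: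
between two consecutive zeros of a solution with eigenvalue `μ`, every
solution with the strictly larger eigenvalue `τ` must vanish. -/
theorem sturm_comparison
    (g u v : ℝ → ℝ) (μ τ : ℝ) (hμτ : μ < τ)
    (hg : ContinuousOn g (Icc (0:ℝ) 1))
    (hgpos : ∀ x ∈ Icc (0:ℝ) 1, 0 < g x)
    (hu : ContDiff ℝ 2 u) (hv : ContDiff ℝ 2 v)
    (hequ : ∀ x ∈ Icc (0:ℝ) 1,
      -deriv (fun t => g t * deriv u t) x = μ * g x * u x)
    (heqv : ∀ x ∈ Icc (0:ℝ) 1,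
      -deriv (fun t => g t * deriv v t) x = τ * g x * v x)
    (a b : ℝ) (ha : 0 ≤ a) (hab : a < b) (hb : b ≤ 1)
    (hua : u a = 0) (hub : u b = 0)
    (hune : ∀ x ∈ Ioo a b, u x ≠ 0) :
    ∃ x ∈ Ioo a b, v x = 0 := by
  by_contra hcon
  push_neg at hcon
  have hu2 : Differentiable ℝ u := hu.differentiable two_ne_zero
  have hv2 : Differentiable ℝ v := hv.differentiable two_ne_zero
  have hsu := sign_dichotomy hu2.continuous hune
  have hsv := sign_dichotomy hv2.continuous hcon
  have huan : (fun s => -u s) a = 0 := by simp [hua]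
  have hubn : (fun s => -u s) b = 0 := by simp [hub]
  rcases hsu with hup | hup <;> rcases hsv with hvp | hvp
  · exact sturm_key g u v μ τ hμτ hg hgpos hu hv hequ heqv a b ha hab hb hua hub hup hvp
  · exact sturm_key g u (fun s => -v s) μ τ hμτ hg hgpos hu hv.neg hequ
      (neg_eq_transform heqv) a b ha hab hb hua hub hup hvp
  · exact sturm_key g (fun s => -u s) v μ τ hμτ hg hgpos hu.neg hv
      (neg_eq_transform hequ) heqv a b ha hab hb huan hubn hup hvp
  · exact sturm_key g (fun s => -u s) (fun s => -v s) μ τ hμτ hg hgpos hu.neg hv.neg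
      (neg_eq_transform hequ) (neg_eq_transform heqv) a b ha hab hb huan hubn hup hvp
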